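/- arXiv:1903.06113 — 2 statements merged into one kernel-verified Lean document; each statement's English description precedes it below -/
import Mathlib

section
/- Let G be a simple graph on a finite vertex set V with adjacency matrix A over ℝ, let α, c ∈ ℝ with 0 ≤ α ≤ 1 and 0 ≤ c ≤ 1, let x : V → ℝ satisfy 0 ≤ x(v) ≤ 1 for all v, and let C ⊆ V be a set of actively screened nodes. Define x'(v) = 0 for v ∈ C and x'(v) = (1 − x(v))·(1 − ∏_{u ∈ N(v)} (1 − α·x(u))) + (1 − c)·x(v) for v ∉ C. Let R be the diagonal 0/1 matrix with R(v,v) = 1 iff v ∈ C, and let M_a = (I − R)·(α·A + (1 − c)·I). Then x'(v) ≤ (M_a x)(v) for all v ∈ V. -/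
open Matrix

lemma one_sub_prod_le_sum' {V : Type*} (s : Finset V) (a : V → ℝ)
    (h0 : ∀ i ∈ s, 0 ≤ a i) (h1 : ∀ i ∈ s, a i ≤ 1) :
    1 - ∏ i ∈ s, (1 - a i) ≤ ∑ i ∈ s, a i := by
  classical
  induction s using Finset.induction with
  | empty => simp
  | @insert j s hni ih =>
    rw [Finset.prod_insert hni, Finset.sum_insert hni]
    have hP0 : 0 ≤ ∏ i ∈ s, (1 - a i) :=
      Finset.prod_nonneg fun i hi => by linarith [h1 i (Finset.mem_insert_of_mem hi)]
    have hP1 : ∏ i ∈ s, (1 - a i) ≤ 1 :=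
      Finset.prod_le_one (fun i hi => by linarith [h1 i (Finset.mem_insert_of_mem hi)])
        (fun i hi => by linarith [h0 i (Finset.mem_insert_of_mem hi)])
    have hih := ih (fun i hi => h0 i (Finset.mem_insert_of_mem hi))
      (fun i hi => h1 i (Finset.mem_insert_of_mem hi))
    have ha0 := h0 j (Finset.mem_insert_self j s)
    nlinarith [mul_nonneg ha0 hP0]

/-- ACTS one-step bound with screening. With a simple graph `G` on a finite
vertex set with adjacency matrix `A`, `α, c ∈ [0,1]`, marginal beliefs `x v ∈ [0,1]`, and a
screened set `C`, the update `x' v = 0` for `v ∈ C` and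
`x' v = (1 - x v)(1 - ∏_{u∈N(v)}(1 - α x u)) + (1-c) x v` otherwise, satisfies
`x' v ≤ (M_a x)(v)` for all `v`, where `M_a = (I - R)(α A + (1-c) I)` and `R` is the
diagonal 0/1 indicator matrix of `C`. -/
theorem acts_one_step_screening_bound
    {V : Type*} [Fintype V] [DecidableEq V]
    (G : SimpleGraph V) [DecidableRel G.Adj]
    (α c : ℝ) (hα0 : 0 ≤ α) (hα1 : α ≤ 1) (hc0 : 0 ≤ c) (hc1 : c ≤ 1)
    (x : V → ℝ) (hx : ∀ v, 0 ≤ x v ∧ x v ≤ 1)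
    (C : Finset V)
    (x' : V → ℝ)
    (hx'C : ∀ v ∈ C, x' v = 0)
    (hx'nC : ∀ v ∉ C, x' v =
      (1 - x v) * (1 - ∏ u ∈ G.neighborFinset v, (1 - α * x u)) + (1 - c) * x v) :
    let R : Matrix V V ℝ := Matrix.diagonal (fun v => if v ∈ C then 1 else 0)
    let Ma : Matrix V V ℝ := (1 - R) * (α • G.adjMatrix ℝ + (1 - c) • (1 : Matrix V V ℝ))
    ∀ v : V, x' v ≤ Ma.mulVec x v := by
  intro R Ma v
  set y : V → ℝ := (α • G.adjMatrix ℝ + (1 - c) • (1 : Matrix V V ℝ)).mulVec x with hy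
  have hyv : ∀ w, y w = α * ∑ u ∈ G.neighborFinset w, x u + (1 - c) * x w := by
    intro w
    rw [hy, add_mulVec, smul_mulVec, smul_mulVec, one_mulVec]
    simp [SimpleGraph.adjMatrix_mulVec_apply]
  have hMa : Ma.mulVec x v = (if v ∈ C then (0:ℝ) else 1) * y v := by
    show ((1 - R) * _).mulVec x v = _
    rw [← Matrix.mulVec_mulVec, ← hy, sub_mulVec, one_mulVec]
    show y v - (Matrix.diagonal _).mulVec y v = _
    rw [Matrix.mulVec_diagonal]
    by_cases h : v ∈ C <;> simp [h]
  rw [hMa]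
  by_cases h : v ∈ C
  · simp [h, hx'C v h]
  · simp only [h, if_neg, if_false, one_mul, hx'nC v h, hyv v]
    have h1 : (1 - x v) * (1 - ∏ u ∈ G.neighborFinset v, (1 - α * x u)) ≤
        α * ∑ u ∈ G.neighborFinset v, x u := by
      have hprod : 1 - ∏ u ∈ G.neighborFinset v, (1 - α * x u) ≤
          ∑ u ∈ G.neighborFinset v, α * x u := by
        apply one_sub_prod_le_sum'
        · intro i _; exact mul_nonneg hα0 (hx i).1
        · intro i _; nlinarith [(hx i).1, (hx i).2]
      have hs : ∑ u ∈ G.neighborFinset v, α * x u = α * ∑ u ∈ G.neighborFinset v, x u := by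
        rw [Finset.mul_sum]
      have hnn : 0 ≤ 1 - ∏ u ∈ G.neighborFinset v, (1 - α * x u) := by
        have : ∏ u ∈ G.neighborFinset v, (1 - α * x u) ≤ 1 :=
          Finset.prod_le_one (fun i _ => by nlinarith [(hx i).1, (hx i).2])
            (fun i _ => by nlinarith [(hx i).1, (hx i).2])
        linarith
      calc (1 - x v) * (1 - ∏ u ∈ G.neighborFinset v, (1 - α * x u))
          ≤ 1 * (1 - ∏ u ∈ G.neighborFinset v, (1 - α * x u)) := by
            apply mul_le_mul_of_nonneg_right _ hnn; linarith [(hx v).1]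
        _ ≤ α * ∑ u ∈ G.neighborFinset v, x u := by rw [one_mul, ← hs]; exact hprod
    linarith
end

section
/- Let G be a simple graph on a finite vertex set V, and let G* be the simple graph on V × {0,1,2} with adjacency: (u,i) adjacent to (v,j) iff either (u = v and {i,j} = {0,1}) or (G.Adj u v and {i,j} = {1,2}). For a set S of vertices of a simple graph H, define spread(H, S) = S ∪ { w : ∃ z ∈ S, H.Adj w z }. Then for every C ⊆ V: spread(G*, (V × {0}) ∪ ((V ∖ C) × {1})) ∩ (V × {2}) ⊆ C × {2} if and only if C is a vertex cover of G (i.e., every edge of G has at least one endpoint in C). -/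
/-- The graph `G*` from the NP-hardness reduction: vertices are `V × {0,1,2}`;
`(u,i)` is adjacent to `(v,j)` iff either `u = v` and `{i,j} = {0,1}`, or
`G.Adj u v` and `{i,j} = {1,2}`. -/
def Gstar {V : Type*} (G : SimpleGraph V) : SimpleGraph (V × Fin 3) where
  Adj a b :=
    (a.1 = b.1 ∧ ((a.2 = 0 ∧ b.2 = 1) ∨ (a.2 = 1 ∧ b.2 = 0)))
    ∨ (G.Adj a.1 b.1 ∧ ((a.2 = 1 ∧ b.2 = 2) ∨ (a.2 = 2 ∧ b.2 = 1)))
  symm := ⟨by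
    rintro a b (⟨h1, h2 | h2⟩ | ⟨h1, h2 | h2⟩)
    · exact Or.inl ⟨h1.symm, Or.inr ⟨h2.2, h2.1⟩⟩
    · exact Or.inl ⟨h1.symm, Or.inl ⟨h2.2, h2.1⟩⟩
    · exact Or.inr ⟨h1.symm, Or.inr ⟨h2.2, h2.1⟩⟩
    · exact Or.inr ⟨h1.symm, Or.inl ⟨h2.2, h2.1⟩⟩⟩
  loopless := ⟨by
    rintro a (⟨h1, ⟨h2, h3⟩ | ⟨h2, h3⟩⟩ | ⟨h1, ⟨h2, h3⟩ | ⟨h2, h3⟩⟩)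
    · rw [h2] at h3; exact absurd h3 (by decide)
    · rw [h2] at h3; exact absurd h3 (by decide)
    · exact G.loopless.irrefl a.1 h1
    · exact G.loopless.irrefl a.1 h1⟩

/-- One step of deterministic SIS spread (α = 1, c = 0): the infected set together with
all neighbors of infected nodes. -/
def spread {W : Type*} (H : SimpleGraph W) (S : Set W) : Set W :=
  S ∪ {w | ∃ z ∈ S, H.Adj w z}

/-- starting from infected set `(V × {0}) ∪ ((V ∖ C) × {1})` (the state at
time 1 after screening the `V₁`-copies of `C`), one step of deterministic spread in `G*`
reaches layer `V × {2}` only within `C × {2}` if and only if `C` is a vertex cover of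
`G`. -/
theorem spread_confined_iff_vertexCover
    {V : Type*} [Fintype V] (G : SimpleGraph V) (C : Set V) :
    (spread (Gstar G)
        (((Set.univ : Set V) ×ˢ ({0} : Set (Fin 3))) ∪ (Cᶜ ×ˢ ({1} : Set (Fin 3))))
      ∩ ((Set.univ : Set V) ×ˢ ({2} : Set (Fin 3)))
      ⊆ C ×ˢ ({2} : Set (Fin 3)))
    ↔ ∀ u v, G.Adj u v → u ∈ C ∨ v ∈ C := by
  constructor
  · intro h u v huv
    by_contra hc
    push_neg at hc
    have : ((u, (2 : Fin 3)) : V × Fin 3) ∈ C ×ˢ ({2} : Set (Fin 3)) := by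
      apply h
      refine ⟨Or.inr ⟨(v, 1), Or.inr ⟨hc.2, rfl⟩, ?_⟩, ⟨trivial, rfl⟩⟩
      exact Or.inr ⟨huv, Or.inr ⟨rfl, rfl⟩⟩
    exact hc.1 this.1
  · rintro hcov ⟨w, i⟩ ⟨hs, -, hi⟩
    simp only [Set.mem_singleton_iff] at hi
    subst hi
    rcases hs with (⟨-, h0⟩ | ⟨-, h0⟩) | ⟨z, hz, hadj⟩
    · simp at h0
    · simp at h0
    · rcases hadj with ⟨-, ⟨h2, -⟩ | ⟨h2, -⟩⟩ | ⟨hadj, ⟨h2, -⟩ | ⟨-, h1⟩⟩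
      · simp at h2
      · simp at h2
      · simp at h2
      · rcases hz with ⟨-, h0⟩ | ⟨hzc, -⟩
        · rw [h1] at h0; simp at h0
        · refine ⟨?_, rfl⟩
          rcases hcov w z.1 hadj with h | h
          · exact h
          · exact absurd h hzc
end
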